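/- Let Γ = (A, Θ, p, c) be an anonymous nonatomic game with incomplete information and let μ be a Bayes correlated Wardrop equilibrium of Γ. Then there exists a sequence ε_n ≥ 0 with ε_n → 0 and, for each n ≥ 1, an ε_n-Bayes correlated equilibrium β^n of the n-player game Γ_n whose induced outcome μ^n satisfies: for every θ ∈ Θ, μ^n(·|θ) converges weak* to μ(·|θ). -/

import Mathlib

open MeasureTheory Filter

def FlowSet (A : Type*) [Fintype A] : Set (A → ℝ) :=
  {y | (∀ a, 0 ≤ y a) ∧ ∑ a, y a = 1}

noncomputable def flowOf {A : Type*} [Fintype A] [DecidableEq A] {n : ℕ}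
    (v : Fin n → A) : A → ℝ :=
  fun a => (∑ i, if v i = a then (1 : ℝ) else 0) / n

lemma flowOf_mem {A : Type*} [Fintype A] [DecidableEq A] {n : ℕ} (hn : 0 < n)
    (v : Fin n → A) : flowOf v ∈ FlowSet A := by
  constructor
  · intro a
    apply div_nonneg _ (Nat.cast_nonneg n)
    exact Finset.sum_nonneg fun i _ => by split <;> norm_num
  · have h1 : ∑ a, flowOf v a = (∑ a, ∑ i, if v i = a then (1 : ℝ) else 0) / n := by
      rw [Finset.sum_div]; rfl
    rw [h1, Finset.sum_comm]
    have h2 : ∀ i : Fin n, (∑ a, if v i = a then (1 : ℝ) else 0) = 1 := by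
      intro i; simp
    rw [Finset.sum_congr rfl fun i _ => h2 i]
    simp
    omega

section Comb
variable {A : Type*} [Fintype A] [DecidableEq A] {n : ℕ}

/-- counts of a profile -/
def countsOf (v : Fin n → A) : A → ℕ := fun a => ∑ i, if v i = a then 1 else 0

lemma sum_countsOf (v : Fin n → A) : ∑ a, countsOf v a = n := by
  unfold countsOf
  rw [Finset.sum_comm]
  simp

lemma flowOf_eq (v : Fin n → A) (a : A) : flowOf v a = (countsOf v a : ℝ) / n := by
  unfold flowOf countsOf
  push_cast
  rfl

lemma exists_profile : ∀ (n : ℕ) (k : A → ℕ), ∑ a, k a = n →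
    ∃ v : Fin n → A, countsOf v = k := by
  intro n
  induction n with
  | zero =>
    intro k hk
    refine ⟨Fin.elim0, funext fun a => ?_⟩
    have := (Finset.sum_eq_zero_iff.mp hk) a (Finset.mem_univ a)
    simp [countsOf, this]
  | succ n ih =>
    intro k hk
    have hex : ∃ a, 0 < k a := by
      by_contra h
      push_neg at h
      simp only [Nat.le_zero] at h
      rw [Finset.sum_congr rfl (fun a _ => h a)] at hk
      simp at hk
    obtain ⟨a0, ha0⟩ := hex
    set k' : A → ℕ := Function.update k a0 (k a0 - 1) with hk'
    have hsum' : ∑ a, k' a = n := by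
      have h2 := Finset.add_sum_erase Finset.univ k (Finset.mem_univ a0)
      have h4 := Finset.add_sum_erase Finset.univ k' (Finset.mem_univ a0)
      have h3 : ∑ a ∈ Finset.univ.erase a0, k' a = ∑ a ∈ Finset.univ.erase a0, k a :=
        Finset.sum_congr rfl fun a ha => by
          rw [hk', Function.update_of_ne (Finset.mem_erase.mp ha).1]
      have h5 : k' a0 = k a0 - 1 := by rw [hk']; simp
      omega
    obtain ⟨v', hv'⟩ := ih k' hsum'
    refine ⟨Fin.cons a0 v', funext fun a => ?_⟩
    have : countsOf (Fin.cons a0 v') a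
        = (if a0 = a then 1 else 0) + countsOf v' a := by
      unfold countsOf
      rw [Fin.sum_univ_succ]
      simp
    rw [this, congrFun hv' a]
    by_cases h : a0 = a
    · subst h; simp [hk']; omega
    · have hne : a ≠ a0 := fun h' => h h'.symm
      have : k' a = k a := Function.update_of_ne hne _ _
      simp [h, this]

lemma countsOf_comp_equiv (v : Fin n → A) (σ : Equiv.Perm (Fin n)) :
    countsOf (v ∘ σ) = countsOf v := by
  funext a
  unfold countsOf
  exact Equiv.sum_comp σ (fun i => if v i = a then 1 else 0)

/-- the number of profiles with given counts -/
def Nc (n : ℕ) (k : A → ℕ) : ℕ :=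
  (Finset.univ.filter (fun v : Fin n → A => countsOf v = k)).card

lemma Nc_pos {k : A → ℕ} (hk : ∑ a, k a = n) : 0 < Nc n k := by
  obtain ⟨v, hv⟩ := exists_profile n k hk
  exact Finset.card_pos.mpr ⟨v, Finset.mem_filter.mpr ⟨Finset.mem_univ v, hv⟩⟩

/-- grouping lemma -/
lemma grouping {k : A → ℕ} (hk : ∑ a, k a = n) (H : (A → ℕ) → ℝ) :
    ∑ v : Fin n → A,
      (if countsOf v = k then (1:ℝ) else 0) / (Nc n (countsOf v)) * H (countsOf v)
      = H k := by
  have h1 : ∀ v : Fin n → A,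
      (if countsOf v = k then (1:ℝ) else 0) / (Nc n (countsOf v)) * H (countsOf v)
      = if countsOf v = k then H k / (Nc n k) else 0 := by
    intro v
    split_ifs with h
    · rw [h]; ring
    · simp
  rw [Finset.sum_congr rfl (fun v _ => h1 v), ← Finset.sum_filter]
  rw [Finset.sum_const, ← Nc]
  have := Nc_pos (n := n) hk
  rw [nsmul_eq_mul]
  field_simp

/-- averaging/exchangeability lemma -/
lemma averaging (hn : 0 < n) (F : (A → ℕ) → ℝ) (i : Fin n) (a : A) :
    ∑ v ∈ Finset.univ.filter (fun v : Fin n → A => v i = a), F (countsOf v)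
    = ∑ v : Fin n → A, ((countsOf v a : ℝ) / n) * F (countsOf v) := by
  have swap_inv : ∀ (j : Fin n),
      ∑ v ∈ Finset.univ.filter (fun v : Fin n → A => v j = a), F (countsOf v)
      = ∑ v ∈ Finset.univ.filter (fun v : Fin n → A => v i = a), F (countsOf v) := by
    intro j
    apply Finset.sum_nbij' (fun v => v ∘ (Equiv.swap i j)) (fun v => v ∘ (Equiv.swap i j))
    · intro v hv
      simp only [Finset.mem_filter, Finset.mem_univ, true_and] at hv ⊢
      simpa [Equiv.swap_apply_left] using hv
    · intro v hv
      simp only [Finset.mem_filter, Finset.mem_univ, true_and] at hv ⊢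
      simpa [Equiv.swap_apply_left] using hv
    · intro v _; funext l; simp
    · intro v _; funext l; simp
    · intro v _
      rw [countsOf_comp_equiv]
  calc ∑ v ∈ Finset.univ.filter (fun v : Fin n → A => v i = a), F (countsOf v)
      = (1/n : ℝ) * ∑ j : Fin n,
        ∑ v ∈ Finset.univ.filter (fun v : Fin n → A => v j = a), F (countsOf v) := by
        rw [Finset.sum_congr rfl (fun j _ => swap_inv j), Finset.sum_const,
          Finset.card_univ, Fintype.card_fin, nsmul_eq_mul]
        have : (n:ℝ) ≠ 0 := Nat.cast_ne_zero.mpr hn.ne'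
        field_simp
    _ = (1/n : ℝ) * ∑ j : Fin n, ∑ v : Fin n → A,
        (if v j = a then (1:ℝ) else 0) * F (countsOf v) := by
        congr 1
        refine Finset.sum_congr rfl fun j _ => ?_
        rw [Finset.sum_filter]
        refine Finset.sum_congr rfl fun v _ => ?_
        split_ifs <;> simp
    _ = ∑ v : Fin n → A, ((countsOf v a : ℝ) / n) * F (countsOf v) := by
        rw [Finset.sum_comm, Finset.mul_sum]
        refine Finset.sum_congr rfl fun v _ => ?_
        rw [← Finset.sum_mul]
        have h9 : ∑ j : Fin n, (if v j = a then (1:ℝ) else 0) = (countsOf v a : ℝ) := by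
          unfold countsOf; push_cast; rfl
        rw [h9]; ring

lemma flowOf_update (v : Fin n → A) (i : Fin n) (b : A) (a : A) :
    flowOf (Function.update v i b) a
      = flowOf v a + ((if b = a then (1:ℝ) else 0) - (if v i = a then 1 else 0)) / n := by
  unfold flowOf
  rw [← add_div]
  congr 1
  rw [← Finset.add_sum_erase Finset.univ _ (Finset.mem_univ i),
    ← Finset.add_sum_erase Finset.univ (fun j => if v j = a then (1:ℝ) else 0) (Finset.mem_univ i)]
  have : ∑ j ∈ Finset.univ.erase i, (if Function.update v i b j = a then (1:ℝ) else 0)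
      = ∑ j ∈ Finset.univ.erase i, (if v j = a then (1:ℝ) else 0) := by
    refine Finset.sum_congr rfl fun j hj => ?_
    rw [Function.update_of_ne (Finset.mem_erase.mp hj).1]
  rw [this, Function.update_self]
  ring

end Comb
section Round
variable {A : Type*} [Fintype A] [Nonempty A] [DecidableEq A]

/-- designated action -/
noncomputable def adflt (A : Type*) [Nonempty A] : A := Classical.arbitrary A

/-- rounding a flow to integer counts with denominator n -/
noncomputable def kR (n : ℕ) (y : A → ℝ) : A → ℕ := fun a =>
  if a = adflt A then n - ∑ b ∈ Finset.univ.erase (adflt A), ⌊(n:ℝ) * y b⌋₊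
  else ⌊(n:ℝ) * y a⌋₊

variable {n : ℕ} {y : A → ℝ}

lemma kR_S_le (hy : y ∈ FlowSet A) :
    ∑ b ∈ Finset.univ.erase (adflt A), ⌊(n:ℝ) * y b⌋₊ ≤ n := by
  have h1 : ((∑ b ∈ Finset.univ.erase (adflt A), ⌊(n:ℝ) * y b⌋₊ : ℕ) : ℝ) ≤ (n:ℝ) := by
    push_cast
    calc ∑ b ∈ Finset.univ.erase (adflt A), (⌊(n:ℝ) * y b⌋₊ : ℝ)
        ≤ ∑ b ∈ Finset.univ.erase (adflt A), (n:ℝ) * y b :=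
          Finset.sum_le_sum fun b _ => Nat.floor_le (mul_nonneg (Nat.cast_nonneg n) (hy.1 b))
      _ ≤ ∑ b, (n:ℝ) * y b :=
          Finset.sum_le_sum_of_subset_of_nonneg (Finset.erase_subset _ _)
            (fun b _ _ => mul_nonneg (Nat.cast_nonneg n) (hy.1 b))
      _ = (n:ℝ) := by rw [← Finset.mul_sum, hy.2, mul_one]
  exact_mod_cast h1

lemma kR_sum (hy : y ∈ FlowSet A) : ∑ a, kR n y a = n := by
  have hmem := Finset.mem_univ (adflt A)
  rw [← Finset.add_sum_erase Finset.univ (kR n y) hmem]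
  have h1 : kR n y (adflt A)
      = n - ∑ b ∈ Finset.univ.erase (adflt A), ⌊(n:ℝ) * y b⌋₊ := by
    unfold kR; simp
  have h2 : ∑ a ∈ Finset.univ.erase (adflt A), kR n y a
      = ∑ b ∈ Finset.univ.erase (adflt A), ⌊(n:ℝ) * y b⌋₊ :=
    Finset.sum_congr rfl fun a ha => by
      unfold kR; rw [if_neg (Finset.mem_erase.mp ha).1]
  rw [h1, h2]
  have := kR_S_le (n := n) hy
  omega

lemma kR_le (hy : y ∈ FlowSet A) (a : A) : kR n y a ≤ n := by
  unfold kR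
  split_ifs with h
  · omega
  · have h1 : (n:ℝ) * y a ≤ (n:ℝ) := by
      have hle : y a ≤ 1 := by
        rw [← hy.2]
        exact Finset.single_le_sum (fun b _ => hy.1 b) (Finset.mem_univ a)
      nlinarith [Nat.cast_nonneg (α := ℝ) n]
    calc ⌊(n:ℝ) * y a⌋₊ ≤ ⌊(n:ℝ)⌋₊ := Nat.floor_le_floor h1
      _ = n := Nat.floor_natCast n

lemma kR_close (hn : 0 < n) (hy : y ∈ FlowSet A) (a : A) :
    |(kR n y a : ℝ) / n - y a| ≤ (Fintype.card A : ℝ) / n := by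
  have hn' : (0:ℝ) < n := Nat.cast_pos.mpr hn
  have hcard : (1:ℝ) ≤ Fintype.card A := by
    exact_mod_cast Fintype.card_pos
  have hfl : ∀ b : A, (n:ℝ) * y b - 1 < (⌊(n:ℝ) * y b⌋₊ : ℝ) ∧
      (⌊(n:ℝ) * y b⌋₊ : ℝ) ≤ (n:ℝ) * y b := by
    intro b
    constructor
    · have := Nat.lt_floor_add_one ((n:ℝ) * y b); linarith
    · exact Nat.floor_le (mul_nonneg (Nat.cast_nonneg n) (hy.1 b))
  by_cases h : a = adflt A
  · subst h
    have hkey : (kR n y (adflt A) : ℝ)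
        = (n:ℝ) - ∑ b ∈ Finset.univ.erase (adflt A), (⌊(n:ℝ) * y b⌋₊ : ℝ) := by
      unfold kR
      rw [if_pos rfl, Nat.cast_sub (kR_S_le hy)]
      push_cast
      ring
    have hya : (n:ℝ) * y (adflt A)
        = (n:ℝ) - ∑ b ∈ Finset.univ.erase (adflt A), (n:ℝ) * y b := by
      have := Finset.add_sum_erase Finset.univ (fun b => (n:ℝ) * y b)
        (Finset.mem_univ (adflt A))
      have h2 : ∑ b, (n:ℝ) * y b = n := by rw [← Finset.mul_sum, hy.2, mul_one]
      linarith
    have hdiff : (kR n y (adflt A) : ℝ) - (n:ℝ) * y (adflt A)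
        = ∑ b ∈ Finset.univ.erase (adflt A), ((n:ℝ) * y b - (⌊(n:ℝ) * y b⌋₊ : ℝ)) := by
      rw [hkey, hya, Finset.sum_sub_distrib]
      ring
    have hub : (kR n y (adflt A) : ℝ) - (n:ℝ) * y (adflt A) ≤ (Fintype.card A : ℝ) := by
      rw [hdiff]
      calc ∑ b ∈ Finset.univ.erase (adflt A), ((n:ℝ) * y b - (⌊(n:ℝ) * y b⌋₊ : ℝ))
          ≤ ∑ b ∈ Finset.univ.erase (adflt A), (1:ℝ) :=
            Finset.sum_le_sum fun b _ => by have := (hfl b).1; linarith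
        _ ≤ (Fintype.card A : ℝ) := by
            rw [Finset.sum_const, nsmul_eq_mul, mul_one]
            exact_mod_cast Finset.card_le_card (Finset.subset_univ _)
    have hlb : (0:ℝ) ≤ (kR n y (adflt A) : ℝ) - (n:ℝ) * y (adflt A) := by
      rw [hdiff]
      exact Finset.sum_nonneg fun b _ => by have := (hfl b).2; linarith
    have hmul : ((Fintype.card A:ℝ)/n) * n = Fintype.card A := div_mul_cancel₀ _ hn'.ne'
    rw [abs_le]
    constructor
    · rw [div_sub' hn'.ne', le_div_iff₀ hn']
      nlinarith
    · rw [div_sub' hn'.ne', div_le_div_iff₀ hn' hn']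
      nlinarith
  · have hkey : (kR n y a : ℝ) = (⌊(n:ℝ) * y a⌋₊ : ℝ) := by
      unfold kR; rw [if_neg h]
    rw [abs_le, hkey]
    have h1 := (hfl a).1
    have h2 := (hfl a).2
    have hmul : ((Fintype.card A:ℝ)/n) * n = Fintype.card A := div_mul_cancel₀ _ hn'.ne'
    constructor
    · rw [div_sub' hn'.ne', le_div_iff₀ hn']
      nlinarith
    · rw [div_sub' hn'.ne', div_le_div_iff₀ hn' hn']
      nlinarith

/-- rounded flow -/
noncomputable def rFl (n : ℕ) (y : A → ℝ) : A → ℝ := fun a => (kR n y a : ℝ) / n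

lemma rFl_mem (hn : 0 < n) (hy : y ∈ FlowSet A) : rFl n y ∈ FlowSet A := by
  obtain ⟨v, hv⟩ := exists_profile n (kR n y) (kR_sum hy)
  have : rFl n y = flowOf v := by
    funext a; rw [flowOf_eq, hv]; rfl
  rw [this]
  exact flowOf_mem hn v

end Round
section Meas
variable {A : Type*} [Fintype A] [Nonempty A] [DecidableEq A]

lemma isCompact_flowSet : IsCompact (FlowSet A) := by
  have hsub : FlowSet A ⊆ Set.pi Set.univ (fun _ : A => Set.Icc (0:ℝ) 1) := by
    intro y hy a _
    refine ⟨hy.1 a, ?_⟩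
    rw [← hy.2]
    exact Finset.single_le_sum (fun b _ => hy.1 b) (Finset.mem_univ a)
  have hclosed : IsClosed (FlowSet A) := by
    have : FlowSet A = (⋂ a, {y : A → ℝ | 0 ≤ y a}) ∩ {y : A → ℝ | ∑ a, y a = 1} := by
      ext y
      simp only [FlowSet, Set.mem_setOf_eq, Set.mem_inter_iff, Set.mem_iInter]
    rw [this]
    exact IsClosed.inter
      (isClosed_iInter fun a => isClosed_le continuous_const (continuous_apply a))
      (isClosed_eq (continuous_finset_sum _ fun a _ => continuous_apply a) continuous_const)
  exact IsCompact.of_isClosed_subset (isCompact_univ_pi fun _ => isCompact_Icc) hclosed hsub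

lemma flowSet_coord_le_one {y : A → ℝ} (hy : y ∈ FlowSet A) (a : A) : y a ≤ 1 := by
  rw [← hy.2]
  exact Finset.single_le_sum (fun b _ => hy.1 b) (Finset.mem_univ a)

/-- uniform continuity helper -/
lemma uc_helper {g : (A → ℝ) → ℝ} (hg : ContinuousOn g (FlowSet A)) :
    ∀ ε > 0, ∃ δ > 0, ∀ x ∈ FlowSet A, ∀ z ∈ FlowSet A,
      dist x z ≤ δ → |g x - g z| ≤ ε := by
  intro ε hε
  have := (isCompact_flowSet.uniformContinuousOn_of_continuous hg)
  rw [Metric.uniformContinuousOn_iff_le] at this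
  obtain ⟨δ, hδ, h⟩ := this ε hε
  exact ⟨δ, hδ, fun x hx z hz hd => by
    have := h x hx z hz hd
    rwa [Real.dist_eq] at this⟩

lemma dist_rFl {n : ℕ} (hn : 0 < n) {y : A → ℝ} (hy : y ∈ FlowSet A) :
    dist (rFl n y) y ≤ (Fintype.card A : ℝ) / n := by
  rw [dist_pi_le_iff (by positivity)]
  intro a
  rw [Real.dist_eq]
  exact kR_close hn hy a

variable {n : ℕ} (μθ : Measure ↥(FlowSet A)) [IsProbabilityMeasure μθ]

lemma measurable_kR (n : ℕ) : Measurable (fun y : ↥(FlowSet A) => kR n (y : A → ℝ)) := by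
  apply measurable_pi_lambda
  intro a
  have hcoord : ∀ b : A, Measurable (fun y : ↥(FlowSet A) => ⌊(n:ℝ) * (y : A → ℝ) b⌋₊) := by
    intro b
    exact Nat.measurable_floor.comp
      ((measurable_const.mul (((continuous_apply b).comp continuous_subtype_val).measurable)))
  unfold kR
  by_cases h : a = adflt A
  · simp only [if_pos h]
    exact measurable_const.sub (Finset.measurable_sum _ fun b _ => hcoord b)
  · simp only [if_neg h]
    exact hcoord a

lemma measurableSet_kR_eq (n : ℕ) (k : A → ℕ) :
    MeasurableSet {y : ↥(FlowSet A) | kR n (y : A → ℝ) = k} :=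
  measurable_kR n (MeasurableSet.singleton k)

/-- integrability of functions of the rounded counts -/
lemma integrable_comp_kR (n : ℕ) (Φ : (A → ℕ) → ℝ) :
    Integrable (fun y : ↥(FlowSet A) => Φ (kR n (y : A → ℝ))) μθ := by
  have hpt : ∀ y : ↥(FlowSet A), Φ (kR n (y : A → ℝ))
      = ∑ k ∈ Fintype.piFinset (fun _ : A => Finset.range (n+1)),
          if kR n (y : A → ℝ) = k then Φ k else 0 := by
    intro y
    rw [Finset.sum_ite_eq (Fintype.piFinset (fun _ : A => Finset.range (n+1)))
      (kR n (y : A → ℝ)) Φ]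
    rw [if_pos]
    rw [Fintype.mem_piFinset]
    intro a
    rw [Finset.mem_range]
    exact Nat.lt_succ_of_le (kR_le y.2 a)
  rw [show (fun y : ↥(FlowSet A) => Φ (kR n (y : A → ℝ))) = fun y : ↥(FlowSet A) =>
      ∑ k ∈ Fintype.piFinset (fun _ : A => Finset.range (n+1)),
        if kR n (y : A → ℝ) = k then Φ k else 0 from funext hpt]
  apply integrable_finset_sum
  intro k _
  have : (fun y : ↥(FlowSet A) => if kR n (y : A → ℝ) = k then Φ k else 0)
      = Set.indicator {y : ↥(FlowSet A) | kR n (y : A → ℝ) = k} (fun _ => Φ k) := by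
    funext y
    rw [Set.indicator_apply]
    rfl
  rw [this]
  exact (integrable_const (Φ k)).indicator (measurableSet_kR_eq n k)

/-- the weight of a count vector -/
noncomputable def Dw (μθ : Measure ↥(FlowSet A)) (n : ℕ) (k : A → ℕ) : ℝ :=
  ∫ y, (if k = kR n (y : A → ℝ) then (1:ℝ) else 0) ∂μθ

lemma Dw_nonneg (n : ℕ) (k : A → ℕ) : 0 ≤ Dw μθ n k :=
  integral_nonneg fun y => by simp only []; split <;> norm_num

/-- key summation identity -/
lemma sum_Dw_mul (hn : 0 < n) (H : (A → ℕ) → ℝ) :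
    ∑ v : Fin n → A, Dw μθ n (countsOf v) / (Nc n (countsOf v)) * H (countsOf v)
      = ∫ y, H (kR n (y : A → ℝ)) ∂μθ := by
  have hterm : ∀ v : Fin n → A,
      Dw μθ n (countsOf v) / (Nc n (countsOf v)) * H (countsOf v)
      = ∫ y, (if countsOf v = kR n (y : A → ℝ) then (1:ℝ) else 0)
          * (H (countsOf v) / (Nc n (countsOf v))) ∂μθ := by
    intro v
    rw [integral_mul_const]
    unfold Dw
    ring
  rw [Finset.sum_congr rfl fun v _ => hterm v]
  rw [← integral_finset_sum]
  · apply integral_congr_ae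
    filter_upwards with y
    have := grouping (n := n) (k := kR n (y : A → ℝ)) (kR_sum y.2) H
    rw [← this]
    refine Finset.sum_congr rfl fun v _ => ?_
    ring
  · intro v _
    apply Integrable.mul_const
    have : (fun y : ↥(FlowSet A) => if countsOf v = kR n (y : A → ℝ) then (1:ℝ) else 0)
        = Set.indicator {y : ↥(FlowSet A) | kR n (y : A → ℝ) = countsOf v} (fun _ => (1:ℝ)) := by
      funext y
      rw [Set.indicator_apply]
      simp only [Set.mem_setOf_eq]
      by_cases h : countsOf v = kR n (y : A → ℝ)
      · rw [if_pos h, if_pos h.symm]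
      · rw [if_neg h, if_neg (fun h' => h h'.symm)]
    rw [this]
    exact (integrable_const 1).indicator (measurableSet_kR_eq n _)

end Meas

/-- master convergence lemma -/
lemma integral_conv {X : Type*} [MeasurableSpace X] (μ : Measure X) [IsProbabilityMeasure μ]
    (F : ℕ → X → ℝ) (G : X → ℝ) (hFi : ∀ n, Integrable (F n) μ) (hGi : Integrable G μ)
    (hclose : ∀ ε > 0, ∀ᶠ n in atTop, ∀ y, |F n y - G y| ≤ ε) :
    Tendsto (fun n => ∫ y, F n y ∂μ) atTop (nhds (∫ y, G y ∂μ)) := by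
  rw [Metric.tendsto_atTop]
  intro ε hε
  obtain ⟨N, hN⟩ := eventually_atTop.mp (hclose (ε/2) (by positivity))
  refine ⟨N, fun n hn => ?_⟩
  have h1 : ∫ y, F n y ∂μ - ∫ y, G y ∂μ = ∫ y, (F n y - G y) ∂μ :=
    (integral_sub (hFi n) hGi).symm
  rw [Real.dist_eq, h1]
  have h2 : ‖∫ y, (F n y - G y) ∂μ‖ ≤ (ε/2) * (μ Set.univ).toReal := by
    apply norm_integral_le_of_norm_le_const
    filter_upwards with y
    rw [Real.norm_eq_abs]
    exact hN n hn y
  rw [Real.norm_eq_abs] at h2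
  have : (μ Set.univ).toReal = 1 := by simp
  rw [this, mul_one] at h2
  linarith
section Apps
variable {A : Type*} [Fintype A] [Nonempty A] [DecidableEq A]

/-- the flow after one player deviates from `a` to `b`, as a function of counts -/
noncomputable def shiftP (n : ℕ) (a b : A) (k : A → ℕ) : A → ℝ := fun cc =>
  (k cc : ℝ)/n + ((if b = cc then (1:ℝ) else 0) - (if a = cc then 1 else 0))/n

lemma shiftP_mem {n : ℕ} (hn : 0 < n) {k : A → ℕ} (hk : ∑ a', k a' = n)
    {a : A} (b : A) (hka : 1 ≤ k a) : shiftP n a b k ∈ FlowSet A := by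
  have hn' : (0:ℝ) < n := Nat.cast_pos.mpr hn
  constructor
  · intro cc
    unfold shiftP
    by_cases hca : a = cc
    · subst hca
      have h1 : (1:ℝ) ≤ (k a : ℝ) := by exact_mod_cast hka
      rw [if_pos rfl]
      have hb : (0:ℝ) ≤ (if b = a then (1:ℝ) else 0) := by split <;> norm_num
      have h3 : (0:ℝ) ≤ ((k a : ℝ) - 1)/n := by
        apply div_nonneg _ hn'.le
        linarith
      have heq : (k a : ℝ)/n + ((if b = a then (1:ℝ) else 0) - 1)/n
          = ((k a : ℝ) - 1)/n + (if b = a then (1:ℝ) else 0)/n := by ring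
      rw [heq]
      exact add_nonneg h3 (div_nonneg hb hn'.le)
    · rw [if_neg hca]
      have hb : (0:ℝ) ≤ (if b = cc then (1:ℝ) else 0) := by split <;> norm_num
      have h0 : (0:ℝ) ≤ (k cc : ℝ)/n := by positivity
      rw [sub_zero]
      exact add_nonneg h0 (div_nonneg hb hn'.le)
  · unfold shiftP
    rw [Finset.sum_add_distrib]
    have h1 : ∑ cc, (k cc : ℝ)/n = 1 := by
      rw [← Finset.sum_div]
      rw [show ∑ cc, (k cc : ℝ) = ((∑ cc, k cc : ℕ) : ℝ) by push_cast; rfl, hk]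
      field_simp
    have h2 : ∑ cc, ((if b = cc then (1:ℝ) else 0) - (if a = cc then 1 else 0))/n = 0 := by
      rw [← Finset.sum_div, Finset.sum_sub_distrib]
      simp
    rw [h1, h2, add_zero]

variable (μθ : Measure ↥(FlowSet A)) [IsProbabilityMeasure μθ]

lemma integrable_restrict {g : (A → ℝ) → ℝ} (hg : ContinuousOn g (FlowSet A)) :
    Integrable (fun y : ↥(FlowSet A) => g (y : A → ℝ)) μθ := by
  obtain ⟨C, hC⟩ := isCompact_flowSet.exists_bound_of_continuousOn hg
  refine Integrable.mono' (integrable_const C) hg.restrict.aestronglyMeasurable ?_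
  filter_upwards with y
  exact hC (y : A → ℝ) y.2

lemma conv_L (a : A) (cb : (A → ℝ) → ℝ) (hcb : ContinuousOn cb (FlowSet A)) :
    Tendsto (fun n => ∫ y, (rFl n (y : A → ℝ) a) * cb (rFl n (y : A → ℝ)) ∂μθ) atTop
      (nhds (∫ y : ↥(FlowSet A), ((y : A → ℝ) a) * cb (y : A → ℝ) ∂μθ)) := by
  have hG : ContinuousOn (fun y : A → ℝ => y a * cb y) (FlowSet A) :=
    (continuous_apply a).continuousOn.mul hcb
  apply integral_conv μθ
  · intro n
    exact integrable_comp_kR μθ n (fun k => ((k a : ℝ)/n) * cb (fun b => (k b : ℝ)/n))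
  · exact integrable_restrict μθ hG
  · intro ε hε
    obtain ⟨δ, hδ, hδ2⟩ := uc_helper hG ε hε
    filter_upwards [eventually_gt_atTop 0,
      (tendsto_const_div_atTop_nhds_zero_nat (Fintype.card A : ℝ)).eventually_lt_const hδ]
      with n hn1 hn2 y
    exact hδ2 _ (rFl_mem hn1 y.2) _ y.2 (le_trans (dist_rFl hn1 y.2) hn2.le)

lemma conv_R (a b : A) (cb : (A → ℝ) → ℝ) (hcb : ContinuousOn cb (FlowSet A)) :
    Tendsto (fun n => ∫ y, (rFl n (y : A → ℝ) a) *
        cb (shiftP n a b (kR n (y : A → ℝ))) ∂μθ) atTop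
      (nhds (∫ y : ↥(FlowSet A), ((y : A → ℝ) a) * cb (y : A → ℝ) ∂μθ)) := by
  apply integral_conv μθ
  · intro n
    exact integrable_comp_kR μθ n (fun k => ((k a : ℝ)/n) * cb (shiftP n a b k))
  · exact integrable_restrict μθ ((continuous_apply a).continuousOn.mul hcb)
  · intro ε hε
    obtain ⟨M, hM⟩ := isCompact_flowSet.exists_bound_of_continuousOn hcb
    set M' := max M 1 with hM'
    have hM'pos : (0:ℝ) < M' := lt_of_lt_of_le one_pos (le_max_right _ _)
    have hMle : ∀ x ∈ FlowSet A, |cb x| ≤ M' := fun x hx =>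
      le_trans (hM x hx) (le_max_left _ _)
    obtain ⟨δ, hδ, hδ2⟩ := uc_helper hcb (ε/2) (by positivity)
    have hcard : (0:ℝ) ≤ (Fintype.card A : ℝ) := Nat.cast_nonneg _
    filter_upwards [eventually_gt_atTop 0,
      (tendsto_const_div_atTop_nhds_zero_nat ((Fintype.card A : ℝ) + 1)).eventually_lt_const hδ,
      (tendsto_const_div_atTop_nhds_zero_nat ((Fintype.card A : ℝ) * M')).eventually_lt_const
        (show (0:ℝ) < ε/2 by positivity)]
      with n hn1 hn2 hn3 y
    have hn' : (0:ℝ) < n := Nat.cast_pos.mpr hn1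
    have hclose : |rFl n (y : A → ℝ) a - (y : A → ℝ) a| ≤ (Fintype.card A : ℝ)/n :=
      kR_close hn1 y.2 a
    have hcbM : |cb (y : A → ℝ)| ≤ M' := hMle _ y.2
    by_cases hz : kR n (y : A → ℝ) a = 0
    · have hF0 : rFl n (y : A → ℝ) a = 0 := by unfold rFl; rw [hz]; simp
      rw [hF0, zero_mul]
      rw [abs_sub_comm, sub_zero, abs_mul]
      calc |(y : A → ℝ) a| * |cb (y : A → ℝ)|
          ≤ ((Fintype.card A : ℝ)/n) * M' := by
            apply mul_le_mul _ hcbM (abs_nonneg _) (by positivity)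
            have : (y : A → ℝ) a = (y : A → ℝ) a - rFl n (y : A → ℝ) a := by
              rw [hF0]; ring
            rw [this, abs_sub_comm]
            exact hclose
        _ = ((Fintype.card A : ℝ) * M')/n := by ring
        _ ≤ ε/2 := hn3.le
        _ ≤ ε := by linarith
    · have hka : 1 ≤ kR n (y : A → ℝ) a := Nat.one_le_iff_ne_zero.mpr hz
      have hmem : shiftP n a b (kR n (y : A → ℝ)) ∈ FlowSet A :=
        shiftP_mem hn1 (kR_sum y.2) b hka
      have hrmem : rFl n (y : A → ℝ) ∈ FlowSet A := rFl_mem hn1 y.2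
      have hdist : dist (shiftP n a b (kR n (y : A → ℝ))) (y : A → ℝ)
          ≤ ((Fintype.card A : ℝ) + 1)/n := by
        rw [dist_pi_le_iff (by positivity)]
        intro cc
        rw [Real.dist_eq]
        have h1 : shiftP n a b (kR n (y : A → ℝ)) cc - (y : A → ℝ) cc
            = (rFl n (y : A → ℝ) cc - (y : A → ℝ) cc)
              + ((if b = cc then (1:ℝ) else 0) - (if a = cc then 1 else 0))/n := by
          unfold shiftP rFl; ring
        rw [h1]
        have h2 : |((if b = cc then (1:ℝ) else 0) - (if a = cc then 1 else 0))/n| ≤ 1/n := by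
          have hnum : |(if b = cc then (1:ℝ) else 0) - (if a = cc then 1 else 0)| ≤ 1 := by
            split_ifs <;> norm_num
          rw [abs_div, abs_of_nonneg (le_of_lt hn')]
          gcongr
        calc |(rFl n (y : A → ℝ) cc - (y : A → ℝ) cc)
              + ((if b = cc then (1:ℝ) else 0) - (if a = cc then 1 else 0))/n|
            ≤ |rFl n (y : A → ℝ) cc - (y : A → ℝ) cc|
              + |((if b = cc then (1:ℝ) else 0) - (if a = cc then 1 else 0))/n| :=
              abs_add_le _ _
          _ ≤ (Fintype.card A : ℝ)/n + 1/n := add_le_add (kR_close hn1 y.2 cc) h2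
          _ = ((Fintype.card A : ℝ) + 1)/n := by ring
      have huc : |cb (shiftP n a b (kR n (y : A → ℝ))) - cb (y : A → ℝ)| ≤ ε/2 :=
        hδ2 _ hmem _ y.2 (le_trans hdist hn2.le)
      have hra : |rFl n (y : A → ℝ) a| ≤ 1 :=
        abs_le.mpr ⟨by linarith [hrmem.1 a], flowSet_coord_le_one hrmem a⟩
      have hsplit : rFl n (y : A → ℝ) a * cb (shiftP n a b (kR n (y : A → ℝ)))
          - (y : A → ℝ) a * cb (y : A → ℝ)
          = rFl n (y : A → ℝ) a * (cb (shiftP n a b (kR n (y : A → ℝ))) - cb (y : A → ℝ))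
            + (rFl n (y : A → ℝ) a - (y : A → ℝ) a) * cb (y : A → ℝ) := by ring
      rw [hsplit]
      calc |rFl n (y : A → ℝ) a * (cb (shiftP n a b (kR n (y : A → ℝ))) - cb (y : A → ℝ))
            + (rFl n (y : A → ℝ) a - (y : A → ℝ) a) * cb (y : A → ℝ)|
          ≤ |rFl n (y : A → ℝ) a| * |cb (shiftP n a b (kR n (y : A → ℝ))) - cb (y : A → ℝ)|
            + |rFl n (y : A → ℝ) a - (y : A → ℝ) a| * |cb (y : A → ℝ)| := by
            refine le_trans (abs_add_le _ _) ?_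
            rw [abs_mul, abs_mul]
        _ ≤ 1 * (ε/2) + ((Fintype.card A : ℝ)/n) * M' := by
            apply add_le_add
            · exact mul_le_mul hra huc (abs_nonneg _) one_pos.le
            · exact mul_le_mul hclose hcbM (abs_nonneg _) (by positivity)
        _ ≤ ε/2 + ε/2 := by
            apply add_le_add (by linarith)
            calc ((Fintype.card A : ℝ)/n) * M' = ((Fintype.card A : ℝ) * M')/n := by ring
              _ ≤ ε/2 := hn3.le
        _ = ε := by ring

open scoped Classical in
/-- value of a continuous function at a rounded point, as a function of counts -/
noncomputable def Hf {A : Type*} [Fintype A] (n : ℕ) (f : C(↥(FlowSet A), ℝ))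
    (k : A → ℕ) : ℝ :=
  if h : (fun a => (k a : ℝ)/n) ∈ FlowSet A then f ⟨_, h⟩ else 0

lemma conv_f (f : C(↥(FlowSet A), ℝ)) :
    Tendsto (fun n => ∫ y, Hf n f (kR n (y : A → ℝ)) ∂μθ) atTop
      (nhds (∫ y, f y ∂μθ)) := by
  haveI : CompactSpace ↥(FlowSet A) := isCompact_iff_compactSpace.mp isCompact_flowSet
  apply integral_conv μθ
  · intro n
    exact integrable_comp_kR μθ n (Hf n f)
  · obtain ⟨C, hC⟩ := isCompact_univ.exists_bound_of_continuousOn f.continuous.continuousOn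
    refine Integrable.mono' (integrable_const C) f.continuous.aestronglyMeasurable ?_
    filter_upwards with y
    exact hC y (Set.mem_univ y)
  · intro ε hε
    have huc := CompactSpace.uniformContinuous_of_continuous f.continuous
    rw [Metric.uniformContinuous_iff] at huc
    obtain ⟨δ, hδ, hδ2⟩ := huc ε hε
    filter_upwards [eventually_gt_atTop 0,
      (tendsto_const_div_atTop_nhds_zero_nat (Fintype.card A : ℝ)).eventually_lt_const hδ]
      with n hn1 hn2 y
    have hmem : (fun a => ((kR n (y : A → ℝ) a : ℝ))/n) ∈ FlowSet A := rFl_mem hn1 y.2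
    unfold Hf
    rw [dif_pos hmem]
    have hd : dist (⟨_, hmem⟩ : ↥(FlowSet A)) y < δ := by
      rw [Subtype.dist_eq]
      exact lt_of_le_of_lt (dist_rFl hn1 y.2) hn2
    exact (hδ2 hd).le.trans_eq' (by rw [Real.dist_eq])

end Apps
section Incentive
variable {A : Type*} [Fintype A] [Nonempty A] [DecidableEq A]
variable (μθ : Measure ↥(FlowSet A)) [IsProbabilityMeasure μθ] {n : ℕ}

lemma incentive_sum (hn : 0 < n) (i : Fin n) (a : A) (ce : (A → ℝ) → ℝ) :
    ∑ v ∈ Finset.univ.filter (fun v : Fin n → A => v i = a),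
        (Dw μθ n (countsOf v) / (Nc n (countsOf v) : ℝ)) * ce (flowOf v)
      = ∫ y, (rFl n (y : A → ℝ) a) * ce (rFl n (y : A → ℝ)) ∂μθ := by
  set F : (A → ℕ) → ℝ := fun k => (Dw μθ n k / (Nc n k : ℝ)) * ce (fun b => (k b : ℝ)/n)
    with hF
  have h1 : ∀ v : Fin n → A,
      (Dw μθ n (countsOf v) / (Nc n (countsOf v) : ℝ)) * ce (flowOf v) = F (countsOf v) := by
    intro v
    rw [hF]
    congr 2
    exact funext fun b => flowOf_eq v b
  rw [Finset.sum_congr rfl fun v _ => h1 v, averaging hn F i a]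
  have h2 : ∀ v : Fin n → A, ((countsOf v a : ℝ)/n) * F (countsOf v)
      = Dw μθ n (countsOf v) / (Nc n (countsOf v) : ℝ)
        * (fun k => ((k a : ℝ)/n) * ce (fun b => (k b : ℝ)/n)) (countsOf v) := by
    intro v; rw [hF]; ring
  rw [Finset.sum_congr rfl fun v _ => h2 v,
    sum_Dw_mul μθ hn (fun k => ((k a : ℝ)/n) * ce (fun b => (k b : ℝ)/n))]
  rfl

lemma incentive_sum_update (hn : 0 < n) (i : Fin n) (a b : A) (ce : (A → ℝ) → ℝ) :
    ∑ v ∈ Finset.univ.filter (fun v : Fin n → A => v i = a),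
        (Dw μθ n (countsOf v) / (Nc n (countsOf v) : ℝ)) * ce (flowOf (Function.update v i b))
      = ∫ y, (rFl n (y : A → ℝ) a) * ce (shiftP n a b (kR n (y : A → ℝ))) ∂μθ := by
  set F : (A → ℕ) → ℝ := fun k => (Dw μθ n k / (Nc n k : ℝ)) * ce (shiftP n a b k) with hF
  have h1 : ∀ v ∈ Finset.univ.filter (fun v : Fin n → A => v i = a),
      (Dw μθ n (countsOf v) / (Nc n (countsOf v) : ℝ)) * ce (flowOf (Function.update v i b))
        = F (countsOf v) := by
    intro v hv
    have hvi : v i = a := (Finset.mem_filter.mp hv).2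
    rw [hF]
    congr 2
    funext cc
    rw [flowOf_update v i b cc, hvi, flowOf_eq v cc]
    rfl
  rw [Finset.sum_congr rfl h1, averaging hn F i a]
  have h2 : ∀ v : Fin n → A, ((countsOf v a : ℝ)/n) * F (countsOf v)
      = Dw μθ n (countsOf v) / (Nc n (countsOf v) : ℝ)
        * (fun k => ((k a : ℝ)/n) * ce (shiftP n a b k)) (countsOf v) := by
    intro v; rw [hF]; ring
  rw [Finset.sum_congr rfl fun v _ => h2 v,
    sum_Dw_mul μθ hn (fun k => ((k a : ℝ)/n) * ce (shiftP n a b k))]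
  rfl

lemma sum_beta_one (hn : 0 < n) :
    ∑ v : Fin n → A, Dw μθ n (countsOf v) / (Nc n (countsOf v) : ℝ) = 1 := by
  have := sum_Dw_mul μθ hn (fun _ => 1)
  simp only [mul_one] at this
  rw [this]
  simp

lemma outcome_eq (hn : 0 < n) (f : C(↥(FlowSet A), ℝ)) :
    ∫ y, f y ∂(∑ v : Fin n → A,
        ENNReal.ofReal (Dw μθ n (countsOf v) / (Nc n (countsOf v) : ℝ)) •
          Measure.dirac (⟨flowOf v, flowOf_mem hn v⟩ : ↥(FlowSet A)))
      = ∫ y, Hf n f (kR n (y : A → ℝ)) ∂μθ := by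
  have hfd : ∀ x : ↥(FlowSet A), Integrable f (Measure.dirac x) := by
    intro x
    refine ⟨f.continuous.aestronglyMeasurable, ?_⟩
    simp only [HasFiniteIntegral]
    rw [MeasureTheory.lintegral_dirac]
    exact ENNReal.coe_lt_top
  have hint : ∀ v ∈ (Finset.univ : Finset (Fin n → A)), Integrable f
      ((ENNReal.ofReal (Dw μθ n (countsOf v) / (Nc n (countsOf v) : ℝ))) •
        Measure.dirac (⟨flowOf v, flowOf_mem hn v⟩ : ↥(FlowSet A))) := by
    intro v _
    exact (hfd _).smul_measure ENNReal.ofReal_ne_top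
  rw [MeasureTheory.integral_finset_sum_measure hint]
  have hterm : ∀ v : Fin n → A,
      ∫ y, f y ∂((ENNReal.ofReal (Dw μθ n (countsOf v) / (Nc n (countsOf v) : ℝ))) •
        Measure.dirac (⟨flowOf v, flowOf_mem hn v⟩ : ↥(FlowSet A)))
      = (Dw μθ n (countsOf v) / (Nc n (countsOf v) : ℝ)) *
          (Hf n f) (countsOf v) := by
    intro v
    rw [MeasureTheory.integral_smul_measure, MeasureTheory.integral_dirac,
      ENNReal.toReal_ofReal
        (div_nonneg (Dw_nonneg μθ n (countsOf v)) (Nat.cast_nonneg _))]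
    have hflow : (fun a => ((countsOf v a : ℝ))/(n:ℝ)) = flowOf v :=
      funext fun a => (flowOf_eq v a).symm
    have hmem' : (fun a => ((countsOf v a : ℝ))/(n:ℝ)) ∈ FlowSet A := by
      rw [hflow]; exact flowOf_mem hn v
    have : (Hf n f) (countsOf v) = f ⟨_, hmem'⟩ := by
      unfold Hf
      rw [dif_pos hmem']
    rw [this]
    rw [smul_eq_mul]
    congr 2
    exact Subtype.ext hflow.symm
  rw [Finset.sum_congr rfl fun v _ => hterm v]
  exact sum_Dw_mul μθ hn (Hf n f)

end Incentive
section Final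
variable {A Θ : Type*} [Fintype A] [Nonempty A] [DecidableEq A] [Fintype Θ] [Nonempty Θ]

/-- auxiliary: discretized equilibrium payoff -/
noncomputable def Lq (p : Θ → ℝ) (c : A → (A → ℝ) → Θ → ℝ)
    (μ : Θ → Measure ↥(FlowSet A)) (n : ℕ) (a : A) : ℝ :=
  ∑ θ, p θ * ∫ y, (rFl n (y : A → ℝ) a) * c a (rFl n (y : A → ℝ)) θ ∂(μ θ)

/-- auxiliary: discretized deviation payoff -/
noncomputable def Rq (p : Θ → ℝ) (c : A → (A → ℝ) → Θ → ℝ)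
    (μ : Θ → Measure ↥(FlowSet A)) (n : ℕ) (a b : A) : ℝ :=
  ∑ θ, p θ * ∫ y, (rFl n (y : A → ℝ) a) * c b (shiftP n a b (kR n (y : A → ℝ))) θ ∂(μ θ)

/-- auxiliary: the equilibrium slack -/
noncomputable def epsq (p : Θ → ℝ) (c : A → (A → ℝ) → Θ → ℝ)
    (μ : Θ → Measure ↥(FlowSet A)) (n : ℕ) : ℝ :=
  ∑ q : A × A, max 0 (Lq p c μ n q.1 - Rq p c μ n q.1 q.2)

variable (p : Θ → ℝ) (c : A → (A → ℝ) → Θ → ℝ) (μ : Θ → Measure ↥(FlowSet A))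

lemma epsq_nonneg (n : ℕ) : 0 ≤ epsq p c μ n :=
  Finset.sum_nonneg fun q _ => le_max_left _ _

lemma Lq_tendsto (hc : ∀ a θ, ContinuousOn (fun y => c a y θ) (FlowSet A))
    (hprob : ∀ θ, IsProbabilityMeasure (μ θ)) (a : A) :
    Tendsto (fun n => Lq p c μ n a) atTop
      (nhds (∑ θ, p θ * ∫ y : ↥(FlowSet A), (y : A → ℝ) a * c a (y : A → ℝ) θ ∂(μ θ))) := by
  apply tendsto_finset_sum
  intro θ _
  haveI := hprob θ
  exact (conv_L (μ θ) a (fun x => c a x θ) (hc a θ)).const_mul (p θ)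

lemma Rq_tendsto (hc : ∀ a θ, ContinuousOn (fun y => c a y θ) (FlowSet A))
    (hprob : ∀ θ, IsProbabilityMeasure (μ θ)) (a b : A) :
    Tendsto (fun n => Rq p c μ n a b) atTop
      (nhds (∑ θ, p θ * ∫ y : ↥(FlowSet A), (y : A → ℝ) a * c b (y : A → ℝ) θ ∂(μ θ))) := by
  apply tendsto_finset_sum
  intro θ _
  haveI := hprob θ
  exact (conv_R (μ θ) a b (fun x => c b x θ) (hc b θ)).const_mul (p θ)

lemma epsq_tendsto (hc : ∀ a θ, ContinuousOn (fun y => c a y θ) (FlowSet A))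
    (hprob : ∀ θ, IsProbabilityMeasure (μ θ))
    (hBCWE : ∀ a b : A,
      ∑ θ, p θ * ∫ y : ↥(FlowSet A), (y : A → ℝ) a * c a (y : A → ℝ) θ ∂(μ θ) ≤
      ∑ θ, p θ * ∫ y : ↥(FlowSet A), (y : A → ℝ) a * c b (y : A → ℝ) θ ∂(μ θ)) :
    Tendsto (fun n => epsq p c μ n) atTop (nhds 0) := by
  have key : ∀ q : A × A,
      Tendsto (fun n => max 0 (Lq p c μ n q.1 - Rq p c μ n q.1 q.2)) atTop (nhds 0) := by
    intro q
    have h1 := (tendsto_const_nhds (x := (0:ℝ)) (f := atTop (α := ℕ))).max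
      ((Lq_tendsto p c μ hc hprob q.1).sub (Rq_tendsto p c μ hc hprob q.1 q.2))
    rwa [max_eq_left (sub_nonpos.mpr (hBCWE q.1 q.2))] at h1
  have h2 := tendsto_finset_sum (Finset.univ : Finset (A × A)) (fun q _ => key q)
  simpa [epsq] using h2

lemma Lq_eq (hprob : ∀ θ, IsProbabilityMeasure (μ θ)) {n : ℕ} (hn : 0 < n)
    (i : Fin n) (a : A) :
    (∑ θ, ∑ v ∈ Finset.univ.filter (fun v : Fin n → A => v i = a),
        p θ * (Dw (μ θ) n (countsOf v) / (Nc n (countsOf v) : ℝ)) * c a (flowOf v) θ)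
      = Lq p c μ n a := by
  unfold Lq
  refine Finset.sum_congr rfl fun θ _ => ?_
  haveI := hprob θ
  have h := incentive_sum (μ θ) hn i a (fun x => c a x θ)
  rw [← h, Finset.mul_sum]
  exact Finset.sum_congr rfl fun v _ => by ring

lemma Rq_eq (hprob : ∀ θ, IsProbabilityMeasure (μ θ)) {n : ℕ} (hn : 0 < n)
    (i : Fin n) (a b : A) :
    (∑ θ, ∑ v ∈ Finset.univ.filter (fun v : Fin n → A => v i = a),
        p θ * (Dw (μ θ) n (countsOf v) / (Nc n (countsOf v) : ℝ))
          * c b (flowOf (Function.update v i b)) θ)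
      = Rq p c μ n a b := by
  unfold Rq
  refine Finset.sum_congr rfl fun θ _ => ?_
  haveI := hprob θ
  have h := incentive_sum_update (μ θ) hn i a b (fun x => c b x θ)
  rw [← h, Finset.mul_sum]
  exact Finset.sum_congr rfl fun v _ => by ring

lemma incentive_main (hprob : ∀ θ, IsProbabilityMeasure (μ θ)) {n : ℕ} (hn : 0 < n)
    (i : Fin n) (a b : A) :
    (∑ θ, ∑ v ∈ Finset.univ.filter (fun v : Fin n → A => v i = a),
        p θ * (Dw (μ θ) n (countsOf v) / (Nc n (countsOf v) : ℝ)) * c a (flowOf v) θ)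
      ≤ (∑ θ, ∑ v ∈ Finset.univ.filter (fun v : Fin n → A => v i = a),
        p θ * (Dw (μ θ) n (countsOf v) / (Nc n (countsOf v) : ℝ))
          * c b (flowOf (Function.update v i b)) θ) + epsq p c μ n := by
  rw [Lq_eq p c μ hprob hn i a, Rq_eq p c μ hprob hn i a b]
  have h1 : Lq p c μ n a - Rq p c μ n a b ≤ max 0 (Lq p c μ n a - Rq p c μ n a b) :=
    le_max_right _ _
  have h2 := Finset.single_le_sum
    (f := fun q : A × A => max 0 (Lq p c μ n q.1 - Rq p c μ n q.1 q.2))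
    (fun q _ => le_max_left _ _) (Finset.mem_univ (a, b))
  dsimp only at h2
  have h3 : epsq p c μ n = ∑ q : A × A, max 0 (Lq p c μ n q.1 - Rq p c μ n q.1 q.2) := rfl
  rw [h3]
  linarith

end Final
/-- Every Bayes correlated Wardrop equilibrium `μ` of the nonatomic
game `Γ` is the weak* limit of outcomes of `ε_n`-Bayes correlated equilibria of the
`n`-player games `Γ_n`, with `ε_n → 0`. -/
theorem stmt15 {A Θ : Type*} [Fintype A] [Nonempty A] [DecidableEq A]
    [Fintype Θ] [Nonempty Θ]
    (p : Θ → ℝ) (hp : ∀ θ, 0 < p θ) (hp1 : ∑ θ, p θ = 1)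
    (c : A → (A → ℝ) → Θ → ℝ)
    (hc : ∀ a θ, ContinuousOn (fun y => c a y θ) (FlowSet A))
    -- μ is a Bayes correlated Wardrop equilibrium of Γ
    (μ : Θ → Measure ↥(FlowSet A)) (hprob : ∀ θ, IsProbabilityMeasure (μ θ))
    (hBCWE : ∀ a b : A,
      ∑ θ, p θ * ∫ y : ↥(FlowSet A), (y : A → ℝ) a * c a (y : A → ℝ) θ ∂(μ θ) ≤
      ∑ θ, p θ * ∫ y : ↥(FlowSet A), (y : A → ℝ) a * c b (y : A → ℝ) θ ∂(μ θ)) :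
    ∃ (ε : ℕ → ℝ) (β : ∀ n : ℕ, Θ → (Fin n → A) → ℝ)
      (ν : ℕ → Θ → Measure ↥(FlowSet A)),
      (∀ n, 0 ≤ ε n) ∧ Tendsto ε atTop (nhds 0) ∧
      (∀ n (hn : 0 < n),
        -- β n is a probability distribution over action profiles in each state
        (∀ θ v, 0 ≤ β n θ v) ∧ (∀ θ, ∑ v, β n θ v = 1) ∧
        -- β n is an (ε n)-Bayes correlated equilibrium of Γ_n
        (∀ (i : Fin n) (a b : A),
          (∑ θ, ∑ v ∈ Finset.univ.filter (fun v : Fin n → A => v i = a),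
            p θ * β n θ v * c a (flowOf v) θ) ≤
          (∑ θ, ∑ v ∈ Finset.univ.filter (fun v : Fin n → A => v i = a),
            p θ * β n θ v * c b (flowOf (Function.update v i b)) θ) + ε n) ∧
        -- ν n is the induced outcome
        (∀ θ, ν n θ =
          ∑ v : Fin n → A, (ENNReal.ofReal (β n θ v)) •
            Measure.dirac (⟨flowOf v, flowOf_mem hn v⟩ : ↥(FlowSet A)))) ∧
      -- weak* convergence of the outcomes to μ, state by state
      (∀ (θ : Θ) (f : C(↥(FlowSet A), ℝ)),
        Tendsto (fun n => ∫ y, f y ∂(ν n θ)) atTop (nhds (∫ y, f y ∂(μ θ)))) := by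
  refine ⟨epsq p c μ,
    fun n θ v => Dw (μ θ) n (countsOf v) / (Nc n (countsOf v) : ℝ),
    fun n θ => if hn : 0 < n then
      (∑ v : Fin n → A, ENNReal.ofReal
          (Dw (μ θ) n (countsOf v) / (Nc n (countsOf v) : ℝ)) •
        Measure.dirac (⟨flowOf v, flowOf_mem hn v⟩ : ↥(FlowSet A)))
      else μ θ,
    epsq_nonneg p c μ, epsq_tendsto p c μ hc hprob hBCWE, ?_, ?_⟩
  · intro n hn
    refine ⟨?_, ?_, ?_, ?_⟩
    · intro θ v
      haveI := hprob θ
      exact div_nonneg (Dw_nonneg (μ θ) n (countsOf v)) (Nat.cast_nonneg _)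
    · intro θ
      haveI := hprob θ
      exact sum_beta_one (μ θ) hn
    · exact fun i a b => incentive_main p c μ hprob hn i a b
    · intro θ
      simp only [dif_pos hn]
  · intro θ f
    haveI := hprob θ
    apply Tendsto.congr' _ (conv_f (μ θ) f)
    filter_upwards [eventually_gt_atTop 0] with n hn
    simp only [dif_pos hn]
    exact (outcome_eq (μ θ) hn f).symm
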